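/- arXiv:2303.01072 — 3 statements merged into one kernel-verified Lean document; each statement's English description precedes it below -/
import Mathlib

section
/- Let n ≥ 2, let g be an n×n complex matrix and let α, α' ∈ {1,…,n} with α ≠ α'. Then det(g_{¬α,¬α'}) = (−1)^{α+α'} Σ_{γ ∈ P_{α'→α}} (−1)^{|γ|+1} c(γ) · det(g_{¬γ,¬γ}), where the sum runs over all paths γ ∈ P_{α'→α}. -/
noncomputable section

open Matrix
open scoped Classical

/-- Encoding of the paths in `P_{α'→α}`: a path `γ = (r₁, …, r_s)` with
`2 ≤ s ≤ m+1` is encoded as a pair of `k : Fin m` (so that `s = k + 2`) and a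
function `r : Fin (k+2) → Fin (m+1)` listing its entries. -/
abbrev PathIdx (m : ℕ) := Σ k : Fin m, Fin (k.1 + 2) → Fin (m + 1)

/-- `γ ∈ P_{α'→α}`: the first entry is `α'`, the last is `α`, and the interior
entries are pairwise distinct and different from both endpoints. -/
def IsPath {m : ℕ} (α α' : Fin (m + 1)) (γ : PathIdx m) : Prop :=
  γ.2 0 = α' ∧ γ.2 (Fin.last (γ.1.1 + 1)) = α ∧
    ∀ i j : Fin (γ.1.1 + 2), i ≠ j → i ≠ 0 → i ≠ Fin.last (γ.1.1 + 1) →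
      γ.2 i ≠ γ.2 j

/-- The length `|γ| = s` of the path. -/
def pathLen {m : ℕ} (γ : PathIdx m) : ℕ := γ.1.1 + 2

/-- `c(γ) = g(r₁,r₂) g(r₂,r₃) ⋯ g(r_{s-1},r_s)`. -/
def pathProd {m : ℕ} (g : Matrix (Fin (m + 1)) (Fin (m + 1)) ℂ) (γ : PathIdx m) : ℂ :=
  ∏ i : Fin (γ.1.1 + 1), g (γ.2 i.castSucc) (γ.2 i.succ)

/-- `det(g_{¬γ,¬γ})`: the determinant of the matrix obtained from `g` by deleting
all rows and columns with indices among the entries of `γ` (the determinant of the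
empty matrix being `1`). -/
def pathOffDet {m : ℕ} (g : Matrix (Fin (m + 1)) (Fin (m + 1)) ℂ) (γ : PathIdx m) : ℂ :=
  (Matrix.of fun i j : {a : Fin (m + 1) // a ∉ Finset.image γ.2 Finset.univ} =>
    g i.1 j.1).det

namespace Statement9Aux

open Equiv Equiv.Perm Finset

variable {m : ℕ}

lemma fin_zero_sub_one (n : ℕ) : (0 : Fin (n+1)) - 1 = Fin.last n := by
  rw [sub_eq_iff_eq_add, Fin.last_add_one]

lemma fin_succ_sub_one {n : ℕ} (i : Fin (n+1)) : (i.succ : Fin (n+2)) - 1 = i.castSucc := by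
  rw [← Fin.coeSucc_eq_succ, add_sub_cancel_right]

lemma isPath_injective {α α' : Fin (m+1)} (hαα' : α ≠ α') {γ : PathIdx m}
    (hγ : IsPath α α' γ) : Function.Injective γ.2 := by
  obtain ⟨h0, hl, hd⟩ := hγ
  have h0l : (0 : Fin (γ.1.1 + 2)) ≠ Fin.last (γ.1.1 + 1) := by
    simp [Fin.ext_iff, Fin.last]
  intro i j hij
  by_contra hne
  by_cases hi0 : i = 0
  · by_cases hjl : j = Fin.last _
    · subst hi0; subst hjl; rw [h0, hl] at hij; exact hαα' hij.symm
    · exact hd j i (Ne.symm hne) (by rintro rfl; exact hne hi0)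
        hjl hij.symm
  · by_cases hil : i = Fin.last _
    · by_cases hj0 : j = 0
      · subst hil; subst hj0; rw [h0, hl] at hij; exact hαα' hij
      · exact hd j i (Ne.symm hne) hj0
          (by rintro rfl; exact hne hil) hij.symm
    · exact hd i j hne hi0 hil hij

/-- the set of entries of a path -/
abbrev pathSet (γ : PathIdx m) : Finset (Fin (m+1)) := Finset.image γ.2 Finset.univ

def pathEquiv (γ : PathIdx m) (hinj : Function.Injective γ.2) :
    Fin (γ.1.1 + 2) ≃ {x : Fin (m+1) // x ∈ pathSet γ} :=
  Equiv.ofBijective (fun i => ⟨γ.2 i, Finset.mem_image_of_mem _ (Finset.mem_univ i)⟩)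
    ⟨fun i j h => hinj (congrArg Subtype.val h), fun x => by
      obtain ⟨i, _, hi⟩ := Finset.mem_image.mp x.2
      exact ⟨i, Subtype.ext hi⟩⟩

@[simp] lemma pathEquiv_apply (γ : PathIdx m) (hinj) (i) :
    (pathEquiv γ hinj i : Fin (m+1)) = γ.2 i := rfl

/-- the permutation associated to `(γ, δ)` -/
def Psi (γ : PathIdx m) (hinj : Function.Injective γ.2)
    (δ : Perm {a : Fin (m+1) // a ∉ pathSet γ}) : Perm (Fin (m+1)) :=
  ((finRotate (γ.1.1 + 2))⁻¹).extendDomain (pathEquiv γ hinj) * Equiv.Perm.ofSubtype δ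

lemma finRotate_inv_apply {n : ℕ} (j : Fin (n+1)) : (finRotate (n+1))⁻¹ j = j - 1 := by
  apply (finRotate (n+1)).injective
  simp [finRotate_succ_apply]

lemma Psi_apply_mem (γ : PathIdx m) (hinj) (δ) (j : Fin (γ.1.1 + 2)) :
    Psi γ hinj δ (γ.2 j) = γ.2 (j - 1) := by
  have h1 : Equiv.Perm.ofSubtype δ (γ.2 j) = γ.2 j :=
    ofSubtype_apply_of_not_mem δ (by simp)
  have h2 : ((finRotate (γ.1.1 + 2))⁻¹).extendDomain (pathEquiv γ hinj) (γ.2 j)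
      = γ.2 ((finRotate (γ.1.1 + 2))⁻¹ j) := by
    have := Perm.extendDomain_apply_image (finRotate (γ.1.1 + 2))⁻¹ (pathEquiv γ hinj) j
    simpa using this
  simp only [Psi, Perm.mul_apply, h1, h2, finRotate_inv_apply]

lemma Psi_apply_not_mem (γ : PathIdx m) (hinj) (δ) {a : Fin (m+1)} (ha : a ∉ pathSet γ) :
    Psi γ hinj δ a = (δ ⟨a, ha⟩ : Fin (m+1)) := by
  have h1 : Equiv.Perm.ofSubtype δ a = (δ ⟨a, ha⟩ : Fin (m+1)) :=
    ofSubtype_apply_of_mem δ ha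
  have h2 : ((finRotate (γ.1.1 + 2))⁻¹).extendDomain (pathEquiv γ hinj)
      ((δ ⟨a, ha⟩ : Fin (m+1))) = _ :=
    Perm.extendDomain_apply_not_subtype _ (pathEquiv γ hinj) (δ ⟨a, ha⟩).2
  simp only [Psi, Perm.mul_apply, h1, h2]

lemma sign_Psi (γ : PathIdx m) (hinj) (δ) :
    Equiv.Perm.sign (Psi γ hinj δ) = (-1) ^ (γ.1.1 + 1) * Equiv.Perm.sign δ := by
  simp [Psi, sign_finRotate]

end Statement9Aux
namespace Statement9Aux
open Equiv Equiv.Perm Finset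

variable {m : ℕ}

def Phi (α α' : Fin (m+1)) (σ : Perm (Fin m)) : Perm (Fin (m+1)) :=
  (finSuccEquiv' α').trans (σ.optionCongr.trans (finSuccEquiv' α).symm)

lemma Phi_apply_base (α α' : Fin (m+1)) (σ : Perm (Fin m)) : Phi α α' σ α' = α := by
  simp [Phi, finSuccEquiv'_at]

lemma Phi_apply_succAbove (α α' : Fin (m+1)) (σ : Perm (Fin m)) (i : Fin m) :
    Phi α α' σ (α'.succAbove i) = α.succAbove (σ i) := by
  simp [Phi, finSuccEquiv'_succAbove, finSuccEquiv'_symm_some]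

lemma cycleRange_eq (p : Fin (m+1)) :
    (finSuccEquiv' p).trans (finSuccEquiv' 0).symm = (Fin.cycleRange p : Perm (Fin (m+1))) := by
  apply Equiv.ext
  intro x
  rcases eq_or_ne x p with rfl | hx
  · simp [finSuccEquiv'_at, finSuccEquiv'_symm_none, Fin.cycleRange_self]
  · obtain ⟨j, rfl⟩ := Fin.exists_succAbove_eq hx
    simp [finSuccEquiv'_succAbove, finSuccEquiv'_symm_some, Fin.cycleRange_succAbove]

lemma sign_Phi (α α' : Fin (m+1)) (σ : Perm (Fin m)) :
    Equiv.Perm.sign (Phi α α' σ) = (-1) ^ (α.1 + α'.1) * Equiv.Perm.sign σ := by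
  have hdecomp : Phi α α' σ =
      (((finSuccEquiv' α').trans (finSuccEquiv' 0).symm).trans
        ((finSuccEquiv' 0).trans (σ.optionCongr.trans (finSuccEquiv' 0).symm))).trans
        (((finSuccEquiv' α).trans (finSuccEquiv' 0).symm).symm) := by
    apply Equiv.ext; intro x; simp [Phi]
  have hmid : Equiv.Perm.sign
      ((finSuccEquiv' (0 : Fin (m+1))).trans (σ.optionCongr.trans (finSuccEquiv' 0).symm))
      = Equiv.Perm.sign σ := by
    have : (finSuccEquiv' (0 : Fin (m+1))).trans (σ.optionCongr.trans (finSuccEquiv' 0).symm)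
        = ((finSuccEquiv' (0 : Fin (m+1))).symm).permCongr σ.optionCongr := by
      apply Equiv.ext; intro x; simp [Equiv.permCongr_apply]
    rw [this, sign_permCongr, Equiv.optionCongr_sign]
  rw [hdecomp]
  have h1 : ∀ (f h : Perm (Fin (m+1))), f.trans h = h * f := fun _ _ => rfl
  rw [h1, h1, _root_.map_mul, _root_.map_mul, cycleRange_eq, cycleRange_eq]
  have hs : Equiv.Perm.sign ((Fin.cycleRange α : Perm (Fin (m+1))).symm)
      = Equiv.Perm.sign (Fin.cycleRange α) := by
    exact Equiv.Perm.sign_symm _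
  rw [hs, hmid, Fin.sign_cycleRange, Fin.sign_cycleRange, pow_add]
  simp [mul_comm, mul_assoc, mul_left_comm]

end Statement9Aux
namespace Statement9Aux
open Equiv Equiv.Perm Finset

variable {m : ℕ}

lemma prod_erase_eq (p : Fin (m+1)) (f : Fin (m+1) → ℂ) :
    ∏ j ∈ Finset.univ.erase p, f j = ∏ i : Fin m, f (p.succAbove i) := by
  have h : (Finset.univ.map p.succAboveEmb) = Finset.univ.erase p := by
    ext x
    simp [Fin.exists_succAbove_eq_iff]
  rw [← h, Finset.prod_map]
  rfl

lemma sign_cast_Phi (α α' : Fin (m+1)) (σ : Perm (Fin m)) :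
    ((Equiv.Perm.sign (Phi α α' σ) : ℤ) : ℂ)
      = (-1 : ℂ) ^ (α.1 + α'.1) * ((Equiv.Perm.sign σ : ℤ) : ℂ) := by
  rw [sign_Phi]
  push_cast
  ring

theorem step1 (g : Matrix (Fin (m + 1)) (Fin (m + 1)) ℂ) (α α' : Fin (m+1)) :
    (g.submatrix α.succAbove α'.succAbove).det =
      (-1:ℂ)^(α.1+α'.1) * ∑ τ ∈ Finset.univ.filter (fun τ : Perm (Fin (m+1)) => τ α' = α),
        ((Equiv.Perm.sign τ : ℤ) : ℂ) * ∏ j ∈ Finset.univ.erase α', g (τ j) j := by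
  rw [Matrix.det_apply', Finset.mul_sum]
  refine Finset.sum_bij (i := fun σ _ => Phi α α' σ) ?_ ?_ ?_ ?_
  · intro σ _
    simp [Finset.mem_filter, Phi_apply_base]
  · intro σ₁ _ σ₂ _ h
    apply Equiv.ext; intro i
    have h2 := congrArg (fun τ : Perm (Fin (m+1)) => τ (α'.succAbove i)) h
    simp only [Phi_apply_succAbove] at h2
    exact Fin.succAbove_right_injective h2
  · intro τ hτ
    rw [Finset.mem_filter] at hτ
    have hτα : τ α' = α := hτ.2
    set ρ : Option (Fin m) ≃ Option (Fin m) :=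
      ((finSuccEquiv' α').symm.trans (τ.trans (finSuccEquiv' α))) with hρ
    refine ⟨Equiv.removeNone ρ, Finset.mem_univ _, ?_⟩
    apply Equiv.ext; intro x
    rcases eq_or_ne x α' with rfl | hx
    · rw [Phi_apply_base, hτα]
    · obtain ⟨i, rfl⟩ := Fin.exists_succAbove_eq hx
      rw [Phi_apply_succAbove]
      have hne : τ (α'.succAbove i) ≠ α := by
        rw [← hτα]
        exact fun h => Fin.succAbove_ne α' i (τ.injective h)
      obtain ⟨j, hj⟩ := Fin.exists_succAbove_eq hne
      have hρs : ρ (some i) = some j := by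
        simp [hρ, finSuccEquiv'_symm_some, ← hj, finSuccEquiv'_succAbove]
      have h2 : some (Equiv.removeNone ρ i) = ρ (some i) :=
        Equiv.removeNone_some ρ ⟨j, hρs⟩
      rw [hρs] at h2
      rw [show ρ.removeNone i = j from Option.some_injective _ h2, hj]
  · intro σ _
    rw [prod_erase_eq α' (fun j => g (Phi α α' σ j) j)]
    simp only [Phi_apply_succAbove, Matrix.submatrix_apply]
    rw [sign_cast_Phi]
    have hone : (-1:ℂ)^(α.1+α'.1) * ((-1:ℂ)^(α.1+α'.1)) = 1 := by
      rw [← pow_add]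
      exact Even.neg_one_pow ⟨α.1+α'.1, rfl⟩
    rw [← mul_assoc, ← mul_assoc, hone, one_mul]

end Statement9Aux
namespace Statement9Aux
open Equiv Equiv.Perm Finset

variable {m : ℕ}

theorem _root_.Equiv.Perm.apply_inv_self {α : Type*} (f : Perm α) (x : α) : f (f⁻¹ x) = x :=
  Equiv.apply_symm_apply f x

theorem _root_.Equiv.Perm.inv_apply_self {α : Type*} (f : Perm α) (x : α) : f⁻¹ (f x) = x :=
  Equiv.symm_apply_apply f x

lemma Psi_inv_apply (γ : PathIdx m) (hinj) (δ) (j : Fin (γ.1.1 + 2)) :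
    (Psi γ hinj δ)⁻¹ (γ.2 j) = γ.2 (j + 1) := by
  apply (Psi γ hinj δ).injective
  rw [Perm.apply_inv_self, Psi_apply_mem, add_sub_cancel_right]

lemma Psi_inv_pow {α α' : Fin (m+1)} (γ : PathIdx m) (hinj) (δ) (hγ : IsPath α α' γ) :
    ∀ jn : ℕ, ∀ h : jn < γ.1.1 + 2, ((Psi γ hinj δ)⁻¹ ^ jn) α' = γ.2 ⟨jn, h⟩ := by
  intro jn
  induction jn with
  | zero => intro h; rw [pow_zero]; exact hγ.1.symm
  | succ n ih =>
    intro h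
    rw [pow_succ', Perm.mul_apply, ih (by omega), Psi_inv_apply]
    have he : (⟨n, by omega⟩ : Fin (γ.1.1+2)) + 1 = ⟨n+1, h⟩ := by
      apply Fin.ext
      rw [Fin.val_add_one_of_lt (by simp [Fin.lt_iff_val_lt_val, Fin.last]; omega)]
    rw [he]

lemma Psi_inv_last {α α' : Fin (m+1)} (γ : PathIdx m) (hinj) (δ) (hγ : IsPath α α' γ) :
    ((Psi γ hinj δ)⁻¹ ^ (γ.1.1 + 1)) α' = α := by
  rw [Psi_inv_pow γ hinj δ hγ (γ.1.1 + 1) (by omega)]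
  exact hγ.2.1

lemma Psi_inv_ne {α α' : Fin (m+1)} (γ : PathIdx m) (hinj : Function.Injective γ.2) (δ)
    (hγ : IsPath α α' γ) :
    ∀ jn : ℕ, jn < γ.1.1 + 1 → ((Psi γ hinj δ)⁻¹ ^ jn) α' ≠ α := by
  intro jn hjn he
  rw [Psi_inv_pow γ hinj δ hγ jn (by omega)] at he
  rw [← hγ.2.1] at he
  have := hinj he
  simp [Fin.ext_iff, Fin.last] at this
  omega

lemma prod_split {α α' : Fin (m+1)} (g : Matrix (Fin (m + 1)) (Fin (m + 1)) ℂ)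
    (γ : PathIdx m) (hinj : Function.Injective γ.2) (δ) (hγ : IsPath α α' γ) :
    ∏ j ∈ Finset.univ.erase α', g (Psi γ hinj δ j) j
      = pathProd g γ *
        ∏ a : {a : Fin (m+1) // a ∉ pathSet γ}, g ((δ a : Fin (m+1))) (a : Fin (m+1)) := by
  have hα'S : α' ∈ pathSet γ := hγ.1 ▸ Finset.mem_image_of_mem _ (Finset.mem_univ 0)
  have hsplit : Finset.univ.erase α' = ((pathSet γ).erase α') ∪ (Finset.univ \ pathSet γ) := by
    ext x
    simp only [Finset.mem_erase, Finset.mem_univ, and_true, Finset.mem_union,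
      Finset.mem_sdiff, true_and]
    constructor
    · intro hx
      by_cases hxS : x ∈ pathSet γ
      · exact Or.inl ⟨hx, hxS⟩
      · exact Or.inr hxS
    · rintro (⟨hx, -⟩ | hx)
      · exact hx
      · rintro rfl; exact hx hα'S
  have hdisj : Disjoint ((pathSet γ).erase α') (Finset.univ \ pathSet γ) := by
    rw [Finset.disjoint_left]
    intro x hx hx2
    exact (Finset.mem_sdiff.mp hx2).2 (Finset.mem_of_mem_erase hx)
  rw [hsplit, Finset.prod_union hdisj]
  congr 1
  · -- product over the path entries
    have himg : (pathSet γ).erase α'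
        = Finset.image (fun i : Fin (γ.1.1 + 1) => γ.2 i.succ) Finset.univ := by
      ext x
      simp only [Finset.mem_erase, Finset.mem_image, Finset.mem_univ, true_and, pathSet]
      constructor
      · rintro ⟨hxα, j, -, rfl⟩
        have hj0 : j ≠ 0 := by rintro rfl; exact hxα hγ.1
        obtain ⟨i, rfl⟩ := Fin.eq_succ_of_ne_zero hj0
        exact ⟨i, rfl⟩
      · rintro ⟨i, rfl⟩
        refine ⟨?_, i.succ, rfl⟩
        rw [← hγ.1]
        exact fun h => (Fin.succ_ne_zero i) (hinj h)
    rw [himg, Finset.prod_image (by intro i _ j _ h; exact Fin.succ_injective _ (hinj h))]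
    unfold pathProd
    apply Finset.prod_congr rfl
    intro i _
    rw [Psi_apply_mem, fin_succ_sub_one]
  · -- product over the complement
    rw [Finset.prod_subtype (p := fun a : Fin (m+1) => a ∉ pathSet γ)
      (Finset.univ \ pathSet γ) (fun x => by simp) (fun a => g (Psi γ hinj δ a) a)]
    apply Finset.prod_congr rfl
    intro a _
    rw [Psi_apply_not_mem γ hinj δ a.2]

end Statement9Aux
namespace Statement9Aux
open Equiv Equiv.Perm Finset

variable {m : ℕ}

lemma exists_preimage {α α' : Fin (m+1)} (hαα' : α ≠ α')
    (τ : Perm (Fin (m+1))) (hτ : τ α' = α) :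
    ∃ (γ : PathIdx m) (hγ : IsPath α α' γ) (δ : Perm {a : Fin (m+1) // a ∉ pathSet γ}),
      Psi γ (isPath_injective hαα' hγ) δ = τ := by
  classical
  have hτ1 : τ ≠ 1 := by rintro rfl; exact hαα' (by simpa using hτ.symm)
  have hex : ∃ j : ℕ, (τ⁻¹ ^ (j+1)) α' = α := by
    refine ⟨orderOf τ⁻¹ - 2, ?_⟩
    have h1 : orderOf τ⁻¹ ≠ 1 := by
      intro h
      exact inv_ne_one.mpr hτ1 (orderOf_eq_one_iff.mp h)
    have h0 : orderOf τ⁻¹ ≠ 0 := (orderOf_pos _).ne'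
    have hco : orderOf τ⁻¹ - 2 + 1 = orderOf τ⁻¹ - 1 := by omega
    rw [hco]
    have h2 : τ⁻¹ ^ (orderOf τ⁻¹ - 1) * τ⁻¹ = 1 := by
      rw [← pow_succ, show orderOf τ⁻¹ - 1 + 1 = orderOf τ⁻¹ by omega, pow_orderOf_eq_one]
    have h3 : τ⁻¹ ^ (orderOf τ⁻¹ - 1) = τ := by
      rw [mul_eq_one_iff_eq_inv] at h2
      simpa using h2
    rw [h3, hτ]
  set t := Nat.find hex with htdef
  have ht : (τ⁻¹ ^ (t+1)) α' = α := Nat.find_spec hex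
  have htmin : ∀ j, j < t → (τ⁻¹ ^ (j+1)) α' ≠ α := fun j hj => Nat.find_min hex hj
  have key : ∀ d : ℕ, 0 < d → d ≤ t+1 → (τ⁻¹ ^ d) α' ≠ α' := by
    intro d hd0 hdt he
    have hd : d - 1 + 1 = d := by omega
    have h2 : τ⁻¹ ((τ⁻¹ ^ (d-1)) α') = α' := by
      rw [← Perm.mul_apply, ← pow_succ', hd, he]
    have h1 : (τ⁻¹ ^ (d-1)) α' = α := by
      have h3 := congrArg τ h2
      rwa [Perm.apply_inv_self, hτ] at h3
    rcases Nat.eq_zero_or_pos (d-1) with h|h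
    · rw [h, pow_zero] at h1
      exact hαα' ((Perm.one_apply α') ▸ h1).symm
    · exact htmin (d-2) (by omega) (by rw [show d-2+1 = d-1 by omega]; exact h1)
  have hdist : ∀ i j : ℕ, i ≤ t+1 → j ≤ t+1 → (τ⁻¹ ^ i) α' = (τ⁻¹ ^ j) α' → i = j := by
    have haux : ∀ i j : ℕ, i < j → j ≤ t+1 → (τ⁻¹ ^ i) α' = (τ⁻¹ ^ j) α' → False := by
      intro i j hij hj he
      have h1 : (τ⁻¹ ^ j) α' = (τ⁻¹ ^ i) ((τ⁻¹ ^ (j-i)) α') := by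
        rw [← Perm.mul_apply, ← pow_add, show i + (j-i) = j by omega]
      rw [h1] at he
      have h2 : (τ⁻¹ ^ (j-i)) α' = α' := ((τ⁻¹ ^ i).injective he).symm
      exact key (j-i) (by omega) (by omega) h2
    intro i j hi hj he
    rcases lt_trichotomy i j with h|h|h
    · exact absurd (haux i j h hj he) (by simp)
    · exact h
    · exact absurd (haux j i h hi he.symm) (by simp)
  have hcard : t + 2 ≤ m + 1 := by
    have hinj2 : Function.Injective (fun i : Fin (t+2) => (τ⁻¹ ^ (i : ℕ)) α') := by
      intro i j h
      exact Fin.ext (hdist i j (Nat.lt_succ_iff.mp i.isLt) (Nat.lt_succ_iff.mp j.isLt) h)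
    simpa using Fintype.card_le_of_injective _ hinj2
  have htm : t < m := by omega
  set γ : PathIdx m := ⟨⟨t, htm⟩, fun i => (τ⁻¹ ^ (i : ℕ)) α'⟩ with hγdef
  have hγ : IsPath α α' γ := by
    refine ⟨by show (τ⁻¹ ^ ((0 : Fin (t+2)) : ℕ)) α' = α'; simp,
      by show (τ⁻¹ ^ ((Fin.last (t+1) : Fin (t+2)) : ℕ)) α' = α; simpa using ht, ?_⟩
    intro i j hij _ _ h
    exact hij (Fin.ext (hdist i j (Nat.lt_succ_iff.mp i.isLt) (Nat.lt_succ_iff.mp j.isLt) h))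
  refine ⟨γ, hγ, ?_⟩
  have hmem : ∀ x : Fin (m+1), x ∈ pathSet γ ↔ ∃ j : ℕ, j ≤ t+1 ∧ (τ⁻¹ ^ j) α' = x := by
    intro x
    simp only [pathSet, Finset.mem_image, Finset.mem_univ, true_and, hγdef]
    constructor
    · rintro ⟨i, rfl⟩
      exact ⟨(i : ℕ), Nat.lt_succ_iff.mp i.isLt, rfl⟩
    · rintro ⟨j, hj, rfl⟩
      exact ⟨⟨j, by show j < t + 2; omega⟩, rfl⟩
  have hiff : ∀ x : Fin (m+1), x ∉ pathSet γ ↔ τ x ∉ pathSet γ := by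
    intro x
    rw [not_iff_not, hmem, hmem]
    constructor
    · rintro ⟨j, hj, rfl⟩
      rcases Nat.eq_zero_or_pos j with rfl|hj0
      · exact ⟨t+1, le_refl _, by simpa [hτ] using ht⟩
      · refine ⟨j-1, by omega, ?_⟩
        have hd : j - 1 + 1 = j := by omega
        have h5 : τ⁻¹ ((τ⁻¹ ^ (j-1)) α') = (τ⁻¹ ^ j) α' := by
          rw [← Perm.mul_apply, ← pow_succ', hd]
        rw [← h5, Perm.apply_inv_self]
    · rintro ⟨j, hj, hjx⟩
      rcases Nat.lt_or_ge j (t+1) with hlt|hge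
      · refine ⟨j+1, by omega, ?_⟩
        rw [pow_succ', Perm.mul_apply, hjx, Perm.inv_apply_self]
      · have hj' : j = t+1 := by omega
        subst hj'
        rw [ht, ← hτ] at hjx
        exact ⟨0, by omega, by simpa using τ.injective hjx⟩
  refine ⟨τ.subtypePerm (fun x => (hiff x).symm), ?_⟩
  apply Equiv.ext
  intro x
  by_cases hx : x ∈ pathSet γ
  · obtain ⟨j, -, rfl⟩ := Finset.mem_image.mp hx
    rw [Psi_apply_mem]
    rcases eq_or_ne j 0 with rfl|hj0
    · rw [fin_zero_sub_one]
      show (τ⁻¹ ^ ((Fin.last (t+1) : Fin (t+2)) : ℕ)) α' = τ ((τ⁻¹ ^ ((0 : Fin (t+2)) : ℕ)) α')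
      simpa [hτ] using ht
    · obtain ⟨i, rfl⟩ := Fin.eq_succ_of_ne_zero hj0
      rw [fin_succ_sub_one]
      show (τ⁻¹ ^ ((i.castSucc : Fin (t+2)) : ℕ)) α' = τ ((τ⁻¹ ^ ((i.succ : Fin (t+2)) : ℕ)) α')
      rw [Fin.val_succ, Fin.coe_castSucc, pow_succ', Perm.mul_apply, Perm.apply_inv_self]
  · rw [Psi_apply_not_mem γ _ _ hx]
    rfl

end Statement9Aux
namespace Statement9Aux
open Equiv Equiv.Perm Finset

variable {m : ℕ}

lemma sign_cast_Psi (γ : PathIdx m) (hinj) (δ) :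
    ((Equiv.Perm.sign (Psi γ hinj δ) : ℤ) : ℂ)
      = (-1:ℂ) ^ (γ.1.1 + 1) * ((Equiv.Perm.sign δ : ℤ) : ℂ) := by
  rw [sign_Psi]
  push_cast
  ring

theorem step2 (g : Matrix (Fin (m + 1)) (Fin (m + 1)) ℂ) (α α' : Fin (m+1)) (hαα' : α ≠ α') :
    ∑ τ ∈ Finset.univ.filter (fun τ : Perm (Fin (m+1)) => τ α' = α),
      ((Equiv.Perm.sign τ : ℤ) : ℂ) * ∏ j ∈ Finset.univ.erase α', g (τ j) j
    = ∑ γ ∈ Finset.univ.filter (fun γ : PathIdx m => IsPath α α' γ),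
        (-1:ℂ) ^ (pathLen γ + 1) * pathProd g γ * pathOffDet g γ := by
  have hRHS : ∀ γ ∈ Finset.univ.filter (fun γ : PathIdx m => IsPath α α' γ),
      (-1:ℂ) ^ (pathLen γ + 1) * pathProd g γ * pathOffDet g γ
      = ∑ δ : Perm {a : Fin (m+1) // a ∉ pathSet γ},
          (-1:ℂ) ^ (pathLen γ + 1) * pathProd g γ *
            (((Equiv.Perm.sign δ : ℤ) : ℂ) *
              ∏ a : {a : Fin (m+1) // a ∉ pathSet γ},
                g ((δ a : Fin (m+1))) ((a : Fin (m+1)))) := by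
    intro γ _
    rw [pathOffDet, Matrix.det_apply', Finset.mul_sum]
    rfl
  rw [Finset.sum_congr rfl hRHS, Finset.sum_sigma']
  symm
  refine Finset.sum_bij
    (i := fun p hp => Psi p.1 (isPath_injective hαα'
      (Finset.mem_filter.mp (Finset.mem_sigma.mp hp).1).2) p.2) ?_ ?_ ?_ ?_
  · intro p hp
    rw [Finset.mem_filter]
    refine ⟨Finset.mem_univ _, ?_⟩
    have hγ := (Finset.mem_filter.mp (Finset.mem_sigma.mp hp).1).2
    have h0 := Psi_apply_mem p.1 (isPath_injective hαα' hγ) p.2 0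
    rw [hγ.1, fin_zero_sub_one] at h0
    rw [h0]
    exact hγ.2.1
  · intro p₁ hp₁ p₂ hp₂ heq
    obtain ⟨⟨k₁, r₁⟩, δ₁⟩ := p₁
    obtain ⟨⟨k₂, r₂⟩, δ₂⟩ := p₂
    have hγ₁ : IsPath α α' ⟨k₁, r₁⟩ := (Finset.mem_filter.mp (Finset.mem_sigma.mp hp₁).1).2
    have hγ₂ : IsPath α α' ⟨k₂, r₂⟩ := (Finset.mem_filter.mp (Finset.mem_sigma.mp hp₂).1).2
    replace heq : Psi ⟨k₁, r₁⟩ (isPath_injective hαα' hγ₁) δ₁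
        = Psi ⟨k₂, r₂⟩ (isPath_injective hαα' hγ₂) δ₂ := heq
    have hk : (k₁ : ℕ) = (k₂ : ℕ) := by
      rcases lt_trichotomy (k₁ : ℕ) (k₂ : ℕ) with h|h|h
      · exfalso
        have h1 := Psi_inv_last ⟨k₁, r₁⟩ (isPath_injective hαα' hγ₁) δ₁ hγ₁
        rw [heq] at h1
        exact Psi_inv_ne ⟨k₂, r₂⟩ (isPath_injective hαα' hγ₂) δ₂ hγ₂ ((k₁ : ℕ)+1)
          (by show (k₁:ℕ)+1 < (k₂:ℕ)+1; omega) h1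
      · exact h
      · exfalso
        have h1 := Psi_inv_last ⟨k₂, r₂⟩ (isPath_injective hαα' hγ₂) δ₂ hγ₂
        rw [← heq] at h1
        exact Psi_inv_ne ⟨k₁, r₁⟩ (isPath_injective hαα' hγ₁) δ₁ hγ₁ ((k₂ : ℕ)+1)
          (by show (k₂:ℕ)+1 < (k₁:ℕ)+1; omega) h1
    have hkk : k₁ = k₂ := Fin.ext hk
    subst hkk
    have hr : r₁ = r₂ := by
      funext j
      have e1 := Psi_inv_pow ⟨k₁, r₁⟩ (isPath_injective hαα' hγ₁) δ₁ hγ₁ (j : ℕ) j.isLt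
      have e2 := Psi_inv_pow ⟨k₁, r₂⟩ (isPath_injective hαα' hγ₂) δ₂ hγ₂ (j : ℕ) j.isLt
      rw [heq] at e1
      have := e1.symm.trans e2
      simpa using this
    subst hr
    have hδ : δ₁ = δ₂ := by
      unfold Psi at heq
      have h2 := mul_left_cancel heq
      apply Equiv.ext
      intro a
      apply Subtype.ext
      have h3 := congrArg (fun f : Perm (Fin (m+1)) => f (a : Fin (m+1))) h2
      simpa using h3
    subst hδ
    rfl
  · intro τ hτ
    have hτα : τ α' = α := (Finset.mem_filter.mp hτ).2
    obtain ⟨γ, hγ, δ, hΨ⟩ := exists_preimage hαα' τ hτα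
    refine ⟨⟨γ, δ⟩, ?_, ?_⟩
    · rw [Finset.mem_sigma]
      exact ⟨Finset.mem_filter.mpr ⟨Finset.mem_univ _, hγ⟩, Finset.mem_univ _⟩
    · exact hΨ
  · intro p hp
    obtain ⟨γ, δ⟩ := p
    have hγ : IsPath α α' γ := (Finset.mem_filter.mp (Finset.mem_sigma.mp hp).1).2
    show _ = ((Equiv.Perm.sign (Psi γ _ δ) : ℤ) : ℂ) * _
    rw [prod_split g γ (isPath_injective hαα' hγ) δ hγ, sign_cast_Psi]
    have hpow : (-1:ℂ) ^ (pathLen γ + 1) = (-1:ℂ) ^ (γ.1.1 + 1) := by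
      show (-1:ℂ) ^ (γ.1.1 + 2 + 1) = _
      rw [pow_succ, pow_succ]
      ring
    rw [hpow]
    ring

end Statement9Aux

/-- row/column expansion of a minor along paths: for an `n×n`
complex matrix `g` (`n = m+1 ≥ 2`) and `α ≠ α'`,
`det(g_{¬α,¬α'}) = (-1)^{α+α'} Σ_{γ ∈ P_{α'→α}} (-1)^{|γ|+1} c(γ) det(g_{¬γ,¬γ})`,
where `g_{¬α,¬α'}` is `g` with row `α` and column `α'` deleted (realized by the
strictly monotone reindexings `Fin.succAbove`). -/
theorem statement9 (m : ℕ) (hm : 1 ≤ m) (g : Matrix (Fin (m + 1)) (Fin (m + 1)) ℂ)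
    (α α' : Fin (m + 1)) (hαα' : α ≠ α') :
    (g.submatrix α.succAbove α'.succAbove).det =
      (-1 : ℂ) ^ (α.1 + α'.1) *
        ∑ γ ∈ Finset.univ.filter (fun γ : PathIdx m => IsPath α α' γ),
          (-1 : ℂ) ^ (pathLen γ + 1) * pathProd g γ * pathOffDet g γ := by
  rw [Statement9Aux.step1 g α α', Statement9Aux.step2 g α α' hαα']
end
end

section
/- Let N ≥ 1, l ≥ 1, C > 0 and D ≥ 2. Let g be an (Nl)×(Nl) complex matrix which is block tridiagonal with respect to the decomposition into N blocks of size l: writing each index α ∈ {1,…,Nl} as α = p(α)l + q(α) with p(α) ∈ {0,…,N−1} and q(α) ∈ {1,…,l}, assume g(α,α') = 0 whenever |p(α)−p(α')| ≥ 2, |g(α,α')| ≤ C whenever |p(α)−p(α')| = 1, and |g(α,α')| ≤ CD whenever p(α) = p(α'). Then there exists a constant C' > 0 depending only on C and l such that for all α ≠ α': |det(g_{¬α,¬α'})| ≤ C'^{Nl} · D^{Nl} · D^{−|p(α)−p(α')|}, where g_{¬α,¬α'} is the matrix obtained from g by deleting row α and column α'. -/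
noncomputable section

open Matrix

/-- `det(g_{¬a,¬b})`: the determinant of the matrix obtained from `g` by deleting
row `a` and column `b`, realized via the strictly monotone enumerations of the
remaining row and column indices. -/
def minorDet {m : ℕ} (g : Matrix (Fin m) (Fin m) ℂ) (a b : Fin m) : ℂ :=
  (Matrix.of fun i j : Fin (m - 1) =>
      g ((Finset.univ.erase a).orderIsoOfFin
            (by rw [Finset.card_erase_of_mem (Finset.mem_univ a), Finset.card_univ,
              Fintype.card_fin]) i).1
        ((Finset.univ.erase b).orderIsoOfFin
            (by rw [Finset.card_erase_of_mem (Finset.mem_univ b), Finset.card_univ,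
              Fintype.card_fin]) j).1).det

private lemma prod_zpow_sum' {ι : Type*} (s : Finset ι) (D : ℝ) (hD : D ≠ 0) (z : ι → ℤ) :
    ∏ i ∈ s, D ^ z i = D ^ (∑ i ∈ s, z i) := by
  induction s using Finset.cons_induction with
  | empty => simp
  | cons a s ha ih => simp [Finset.prod_cons, Finset.sum_cons, zpow_add₀ hD, ih]

private lemma card_window' (m l : ℕ) (hl : 1 ≤ l) (c : ℕ) :
    (Finset.univ.filter (fun x : Fin m => (((x.1 / l : ℕ) : ℤ) - (c:ℤ)).natAbs ≤ 1)).card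
      ≤ 3 * l := by
  have hF : ∀ v : ℕ, (Finset.univ.filter (fun x : Fin m => x.1 / l = v)).card ≤ l := by
    intro v
    have h2 := Finset.card_le_card_of_injOn
      (f := fun x : Fin m => (⟨x.1 % l, Nat.mod_lt _ hl⟩ : Fin l))
      (s := Finset.univ.filter (fun x : Fin m => x.1 / l = v)) (t := Finset.univ)
      (fun x _ => Finset.mem_univ _) ?_
    · simpa using h2
    · intro x hx y hy hxy
      simp only [Finset.mem_coe, Finset.mem_filter, Finset.mem_univ, true_and] at hx hy
      simp only [Fin.mk.injEq] at hxy
      have ex : x.1 = l * v + x.1 % l := by rw [← hx]; exact (Nat.div_add_mod _ _).symm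
      have ey : y.1 = l * v + y.1 % l := by rw [← hy]; exact (Nat.div_add_mod _ _).symm
      exact Fin.val_injective (by rw [ex, hxy, ← ey])
  calc (Finset.univ.filter (fun x : Fin m => (((x.1 / l : ℕ) : ℤ) - (c:ℤ)).natAbs ≤ 1)).card
      ≤ ((Finset.univ.filter (fun x : Fin m => x.1 / l = c - 1)) ∪
         (Finset.univ.filter (fun x : Fin m => x.1 / l = c)) ∪
         (Finset.univ.filter (fun x : Fin m => x.1 / l = c + 1))).card := by
        apply Finset.card_le_card
        intro x hx
        simp only [Finset.mem_filter, Finset.mem_univ, true_and, Finset.mem_union] at hx ⊢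
        generalize x.1 / l = q at hx ⊢
        omega
    _ ≤ 3 * l := by
        refine (Finset.card_union_le _ _).trans ?_
        have h0 := Finset.card_union_le (Finset.univ.filter (fun x : Fin m => x.1 / l = c - 1))
          (Finset.univ.filter (fun x : Fin m => x.1 / l = c))
        have h1 := hF (c-1); have h2 := hF c; have h3 := hF (c+1); omega

private lemma minor_bound (l : ℕ) (hl : 1 ≤ l) (C : ℝ) (hC : 0 < C) (D : ℝ) (hD : 2 ≤ D)
    (m : ℕ) (g : Matrix (Fin m) (Fin m) ℂ)
    (hfar : ∀ a b : Fin m,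
      2 ≤ |((a.1 / l : ℕ) : ℤ) - ((b.1 / l : ℕ) : ℤ)| → g a b = 0)
    (hnear : ∀ a b : Fin m,
      |((a.1 / l : ℕ) : ℤ) - ((b.1 / l : ℕ) : ℤ)| = 1 → ‖g a b‖ ≤ C)
    (hdiag : ∀ a b : Fin m, a.1 / l = b.1 / l → ‖g a b‖ ≤ C * D)
    (a b : Fin m) :
    ‖minorDet g a b‖ *
        D ^ ((((a.1 / l : ℕ) : ℤ) - ((b.1 / l : ℕ) : ℤ)).natAbs)
      ≤ ((3 * l : ℕ) * (C * D)) ^ (m - 1) := by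
  have hD0 : (0:ℝ) < D := by linarith
  have hD1 : (1:ℝ) ≤ D := by linarith
  have hDne : D ≠ 0 := ne_of_gt hD0
  set q : Fin m → ℤ := fun x => ((x.1 / l : ℕ) : ℤ) with hq
  set k : ℕ := (q a - q b).natAbs with hk
  set s : ℤ := if q a ≤ q b then 1 else -1 with hs
  have hs1 : s = 1 ∨ s = -1 := by rw [hs]; split <;> simp
  have hsk : s * (q b - q a) = (k : ℤ) := by
    rw [hs, hk]; split <;> rename_i h <;> omega
  have hcard_a : (Finset.univ.erase a).card = m - 1 := by
    rw [Finset.card_erase_of_mem (Finset.mem_univ a), Finset.card_univ, Fintype.card_fin]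
  have hcard_b : (Finset.univ.erase b).card = m - 1 := by
    rw [Finset.card_erase_of_mem (Finset.mem_univ b), Finset.card_univ, Fintype.card_fin]
  set e := (Finset.univ.erase a).orderIsoOfFin hcard_a with he
  set f := (Finset.univ.erase b).orderIsoOfFin hcard_b with hf
  set M : Matrix (Fin (m-1)) (Fin (m-1)) ℂ :=
    Matrix.of (fun i j => g (e i).1 (f j).1) with hM
  have hminor : minorDet g a b = M.det := rfl
  set W : Fin (m-1) → Fin (m-1) → ℝ :=
    fun i j => ‖g (e i).1 (f j).1‖ * D ^ (s * (q (e i).1 - q (f j).1)) with hW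
  have hW0 : ∀ i j, 0 ≤ W i j := fun i j =>
    mul_nonneg (norm_nonneg _) (le_of_lt (zpow_pos hD0 _))
  have hexp : ∀ σ : Equiv.Perm (Fin (m-1)),
      ∑ i, s * (q (e (σ i)).1 - q (f i).1) = (k : ℤ) := by
    intro σ
    rw [← Finset.mul_sum, Finset.sum_sub_distrib]
    have h1 : ∑ i, q (e (σ i)).1 = ∑ x ∈ Finset.univ.erase a, q x := by
      rw [Equiv.sum_comp σ (fun i => q (e i).1), ← Finset.sum_coe_sort (Finset.univ.erase a) q]
      exact Equiv.sum_comp e.toEquiv (fun x => q x.1)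
    have h2 : ∑ i, q (f i).1 = ∑ x ∈ Finset.univ.erase b, q x := by
      rw [← Finset.sum_coe_sort (Finset.univ.erase b) q]
      exact Equiv.sum_comp f.toEquiv (fun x => q x.1)
    rw [h1, h2, Finset.sum_erase_eq_sub (Finset.mem_univ a),
      Finset.sum_erase_eq_sub (Finset.mem_univ b), ← hsk]
    ring
  have hper : ∀ σ : Equiv.Perm (Fin (m-1)),
      ∏ i, W (σ i) i = (∏ i, ‖M (σ i) i‖) * D ^ (k : ℤ) := by
    intro σ
    rw [hW]
    rw [Finset.prod_mul_distrib,
      prod_zpow_sum' Finset.univ D hDne (fun i => s * (q (e (σ i)).1 - q (f i).1)), hexp σ]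
    rfl
  have hdetperm : ‖M.det‖ ≤ ∑ σ : Equiv.Perm (Fin (m-1)),
      ∏ i, ‖M (σ i) i‖ := by
    rw [Matrix.det_apply]
    refine (norm_sum_le _ _).trans (Finset.sum_le_sum fun σ _ => ?_)
    rcases Int.units_eq_one_or (Equiv.Perm.sign σ) with h | h <;>
      simp [h, Units.smul_def, norm_prod]
  have hfun : ∑ σ : Equiv.Perm (Fin (m-1)), ∏ i, W (σ i) i
      ≤ ∏ i, ∑ j, W j i := by
    rw [show (∏ i, ∑ j, W j i) = ∑ x : Fin (m-1) → Fin (m-1), ∏ i, W (x i) i from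
      Fintype.prod_sum fun i j => W j i]
    have himg : ∑ x ∈ Finset.univ.image (fun σ : Equiv.Perm (Fin (m-1)) => ⇑σ),
        (∏ i, W (x i) i) = ∑ σ : Equiv.Perm (Fin (m-1)), ∏ i, W (σ i) i :=
      Finset.sum_image (by intro x _ y _ h; exact Equiv.coe_fn_injective h)
    rw [← himg]
    exact Finset.sum_le_sum_of_subset_of_nonneg (Finset.subset_univ _)
      (fun x _ _ => Finset.prod_nonneg fun i _ => hW0 _ _)
  have hcol : ∀ j, ∑ i, W i j ≤ (3 * l : ℕ) * (C * D) := by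
    intro j
    set c : ℕ := (f j).1.1 / l with hc
    have hqc : q (f j).1 = (c : ℤ) := rfl
    have hstep : ∀ i, W i j ≤ if (q (e i).1 - (c:ℤ)).natAbs ≤ 1 then C * D else 0 := by
      intro i
      by_cases hcase : (q (e i).1 - (c:ℤ)).natAbs ≤ 1
      · rw [if_pos hcase]
        have hΔ : q (e i).1 - (c:ℤ) = -1 ∨ q (e i).1 - (c:ℤ) = 0 ∨ q (e i).1 - (c:ℤ) = 1 := by
          omega
        rcases hΔ with hΔ | hΔ | hΔ
        · have h1 : q (e i).1 - q (f j).1 = -1 := by rw [hqc]; omega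
          have habs : ‖g (e i).1 (f j).1‖ ≤ C := by
            apply hnear
            show |q (e i).1 - q (f j).1| = 1
            rw [h1]; norm_num
          have hz : s * (q (e i).1 - q (f j).1) = 1 ∨ s * (q (e i).1 - q (f j).1) = -1 := by
            rcases hs1 with h | h <;> rw [h, h1] <;> simp
          have hDz : D ^ (s * (q (e i).1 - q (f j).1)) ≤ D := by
            rcases hz with h | h <;> rw [h]
            · rw [zpow_one]
            · rw [_root_.zpow_neg_one]
              have h2 : D⁻¹ ≤ 1 := inv_le_one_of_one_le₀ hD1
              linarith
          exact mul_le_mul habs hDz (le_of_lt (zpow_pos hD0 _)) (le_of_lt hC)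
        · have h1 : q (e i).1 - q (f j).1 = 0 := by rw [hqc]; omega
          have heq : (e i).1.1 / l = (f j).1.1 / l := by
            have h2 : q (e i).1 = q (f j).1 := by omega
            simp only [hq] at h2
            exact_mod_cast h2
          have habs := hdiag _ _ heq
          rw [hW]
          simp only [h1, mul_zero, zpow_zero, mul_one]
          exact habs
        · have h1 : q (e i).1 - q (f j).1 = 1 := by rw [hqc]; omega
          have habs : ‖g (e i).1 (f j).1‖ ≤ C := by
            apply hnear
            show |q (e i).1 - q (f j).1| = 1
            rw [h1]; norm_num
          have hz : s * (q (e i).1 - q (f j).1) = 1 ∨ s * (q (e i).1 - q (f j).1) = -1 := by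
            rcases hs1 with h | h <;> rw [h, h1] <;> simp
          have hDz : D ^ (s * (q (e i).1 - q (f j).1)) ≤ D := by
            rcases hz with h | h <;> rw [h]
            · rw [zpow_one]
            · rw [_root_.zpow_neg_one]
              have h2 : D⁻¹ ≤ 1 := inv_le_one_of_one_le₀ hD1
              linarith
          exact mul_le_mul habs hDz (le_of_lt (zpow_pos hD0 _)) (le_of_lt hC)
      · rw [if_neg hcase]
        have hzero : g (e i).1 (f j).1 = 0 := by
          apply hfar
          show 2 ≤ |q (e i).1 - q (f j).1|
          rw [hqc]
          rw [Int.abs_eq_natAbs]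
          omega
        rw [hW]; simp [hzero]
    calc ∑ i, W i j ≤ ∑ i, if (q (e i).1 - (c:ℤ)).natAbs ≤ 1 then C * D else 0 :=
          Finset.sum_le_sum fun i _ => hstep i
      _ = (Finset.univ.filter (fun i : Fin (m-1) => (q (e i).1 - (c:ℤ)).natAbs ≤ 1)).card
            * (C * D) := by rw [Finset.sum_ite, Finset.sum_const, Finset.sum_const]; simp
      _ ≤ (3 * l : ℕ) * (C * D) := by
          have hcd : (0:ℝ) ≤ C * D := by positivity
          refine mul_le_mul_of_nonneg_right ?_ hcd
          have hinj : (Finset.univ.filter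
              (fun i : Fin (m-1) => (q (e i).1 - (c:ℤ)).natAbs ≤ 1)).card
              ≤ (Finset.univ.filter
              (fun x : Fin m => (((x.1 / l : ℕ) : ℤ) - (c:ℤ)).natAbs ≤ 1)).card := by
            apply Finset.card_le_card_of_injOn (fun i => (e i).1)
            · intro i hi
              simp only [Finset.coe_filter, Finset.mem_univ, true_and, Set.mem_setOf_eq] at hi ⊢
              exact hi
            · intro x _ y _ hxy
              exact e.injective (Subtype.val_injective hxy)
          have hcw := card_window' m l hl c
          exact_mod_cast hinj.trans hcw
  calc ‖minorDet g a b‖ * D ^ k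
      = ‖minorDet g a b‖ * D ^ (k : ℤ) := by rw [zpow_natCast]
    _ ≤ (∑ σ : Equiv.Perm (Fin (m-1)), ∏ i, ‖M (σ i) i‖) * D ^ (k : ℤ) := by
        rw [hminor]
        exact mul_le_mul_of_nonneg_right hdetperm (le_of_lt (zpow_pos hD0 _))
    _ = ∑ σ : Equiv.Perm (Fin (m-1)), ∏ i, W (σ i) i := by
        rw [Finset.sum_mul]; exact (Finset.sum_congr rfl fun σ _ => (hper σ)).symm
    _ ≤ ∏ i, ∑ j, W j i := hfun
    _ ≤ ∏ _i : Fin (m-1), ((3*l : ℕ) * (C * D)) :=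
        Finset.prod_le_prod (fun i _ => Finset.sum_nonneg fun j _ => hW0 _ _)
          (fun i _ => hcol i)
    _ = ((3*l : ℕ) * (C * D)) ^ (m-1) := by
        rw [Finset.prod_const, Finset.card_univ, Fintype.card_fin]

/-- upper bound for the minors of a block tridiagonal matrix.
Indices `α ∈ {1, …, Nl}` are identified with `Fin (N*l)`, the site coordinate
being `p(α) = α / l`. There is `C' > 0` depending only on `C` and `l` such that
for every `N ≥ 1`, `D ≥ 2` and every block tridiagonal `g` with blocks of size
`≤ C` off the diagonal blocks and `≤ CD` on the diagonal blocks, the minors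
satisfy `|det(g_{¬α,¬α'})| ≤ C'^{Nl} D^{Nl} D^{-|p(α)-p(α')|}`. -/
theorem statement10 (l : ℕ) (hl : 1 ≤ l) (C : ℝ) (hC : 0 < C) :
    ∃ C' : ℝ, 0 < C' ∧
      ∀ N : ℕ, 1 ≤ N → ∀ D : ℝ, 2 ≤ D →
        ∀ g : Matrix (Fin (N * l)) (Fin (N * l)) ℂ,
          (∀ a b : Fin (N * l),
            2 ≤ |((a.1 / l : ℕ) : ℤ) - ((b.1 / l : ℕ) : ℤ)| → g a b = 0) →
          (∀ a b : Fin (N * l),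
            |((a.1 / l : ℕ) : ℤ) - ((b.1 / l : ℕ) : ℤ)| = 1 →
              ‖g a b‖ ≤ C) →
          (∀ a b : Fin (N * l), a.1 / l = b.1 / l → ‖g a b‖ ≤ C * D) →
          ∀ a b : Fin (N * l), a ≠ b →
            ‖minorDet g a b‖ ≤
              C' ^ (N * l) * D ^ (N * l) *
                (D ^ (((a.1 / l : ℕ) : ℤ) - ((b.1 / l : ℕ) : ℤ)).natAbs)⁻¹ := by
  refine ⟨3 * l * C + 1, by positivity, ?_⟩
  intro N hN D hD g hfar hnear hdiag a b hab
  have hD0 : (0:ℝ) < D := by linarith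
  have hD1 : (1:ℝ) ≤ D := by linarith
  have hmain := minor_bound l hl C hC D hD (N * l) g hfar hnear hdiag a b
  set k : ℕ := (((a.1 / l : ℕ) : ℤ) - ((b.1 / l : ℕ) : ℤ)).natAbs with hk
  have hm1 : 1 ≤ N * l := Nat.mul_pos hN hl
  have hrhs : (((3*l : ℕ) : ℝ) * (C * D)) ^ (N * l - 1)
      ≤ (3 * l * C + 1) ^ (N * l) * D ^ (N * l) := by
    have h1 : (((3*l : ℕ) : ℝ) * (C * D)) ^ (N * l - 1)
        = (((3*l : ℕ) : ℝ) * C) ^ (N * l - 1) * D ^ (N * l - 1) := by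
      rw [← mul_pow]; ring_nf
    rw [h1]
    have h0 : (0:ℝ) ≤ 3 * (l:ℝ) * C := by positivity
    have h2 : (((3*l : ℕ) : ℝ) * C) ^ (N * l - 1) ≤ (3 * l * C + 1) ^ (N * l) := by
      calc (((3*l : ℕ) : ℝ) * C) ^ (N * l - 1) ≤ (3 * (l:ℝ) * C + 1) ^ (N * l - 1) := by
            apply pow_le_pow_left₀ (by positivity)
            push_cast; linarith
        _ ≤ (3 * (l:ℝ) * C + 1) ^ (N * l) :=
            pow_le_pow_right₀ (by linarith) (Nat.sub_le (N * l) 1)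
    have h3 : D ^ (N * l - 1) ≤ D ^ (N * l) := pow_le_pow_right₀ hD1 (Nat.sub_le (N * l) 1)
    exact mul_le_mul h2 h3 (by positivity) (by positivity)
  have hfin : ‖minorDet g a b‖ * D ^ k ≤ (3 * l * C + 1) ^ (N * l) * D ^ (N * l) :=
    hmain.trans hrhs
  have hkpos : (0:ℝ) < D ^ k := by positivity
  rw [← div_eq_mul_inv, le_div_iff₀ hkpos]
  exact hfin
end
end

section
/- Let l ≥ 1 and let F(x), M(x) be l×l matrices whose entries are real analytic 2π-periodic functions of x ∈ ℝ admitting holomorphic extensions to the strip {z = x + iy : |y| ≤ ρ} for some ρ > 0. Assume that for every t ∈ ℝ the function x ↦ det[(F(x) − tI)M(x)] is not identically zero. Then for every C₂ > 0 and every 0 < δ < ρ there exists ε₁ = ε₁(δ) > 0 such that for every μ ∈ ℝ with |μ| ≤ C₂ there exists y with δ/2 ≤ |y| ≤ 2δ such that inf_{x ∈ ℝ} |det[(F(x + iy) − μI)M(x + iy)]| ≥ ε₁. -/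
noncomputable section

open Matrix Real Filter Set Topology

private def gdet {l : ℕ} (Fc Mc : ℂ → Matrix (Fin l) (Fin l) ℂ) (μ : ℝ) (z : ℂ) : ℂ :=
  ((Fc z - (μ : ℂ) • (1 : Matrix (Fin l) (Fin l) ℂ)) * Mc z).det

private lemma analyticOnNhd_matrix_det {l : ℕ} {S : Set ℂ} {A : ℂ → Matrix (Fin l) (Fin l) ℂ}
    (hA : ∀ i j, AnalyticOnNhd ℂ (fun z => A z i j) S) :
    AnalyticOnNhd ℂ (fun z => (A z).det) S := by
  simp only [Matrix.det_apply']
  exact Finset.analyticOnNhd_fun_sum _ fun σ _ =>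
    analyticOnNhd_const.mul (Finset.analyticOnNhd_fun_prod _ fun i _ => hA _ _)

/-- let `F(x), M(x)` be `l×l` matrices whose entries are real
analytic `2π`-periodic functions of `x ∈ ℝ` admitting holomorphic extensions
`Fc, Mc` to the strip `{|Im z| ≤ ρ}`. If for every `t ∈ ℝ` the function
`x ↦ det[(F(x) - tI)M(x)]` is not identically zero, then for every `C₂ > 0` and
every `0 < δ < ρ` there is `ε₁ = ε₁(δ) > 0` such that for every `μ ∈ ℝ` with
`|μ| ≤ C₂` there is `y` with `δ/2 ≤ |y| ≤ 2δ` and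
`inf_{x ∈ ℝ} |det[(Fc(x+iy) - μI) Mc(x+iy)]| ≥ ε₁`. -/
theorem statement12 (l : ℕ) (hl : 1 ≤ l) (ρ : ℝ) (hρ : 0 < ρ)
    (F M : ℝ → Matrix (Fin l) (Fin l) ℝ)
    (Fc Mc : ℂ → Matrix (Fin l) (Fin l) ℂ)
    (hFanal : ∀ i j, ∀ x : ℝ, AnalyticAt ℝ (fun x => F x i j) x)
    (hManal : ∀ i j, ∀ x : ℝ, AnalyticAt ℝ (fun x => M x i j) x)
    (hFper : ∀ i j, Function.Periodic (fun x => F x i j) (2 * π))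
    (hMper : ∀ i j, Function.Periodic (fun x => M x i j) (2 * π))
    (hFhol : ∀ i j, DifferentiableOn ℂ (fun z => Fc z i j) {z : ℂ | |z.im| ≤ ρ})
    (hMhol : ∀ i j, DifferentiableOn ℂ (fun z => Mc z i j) {z : ℂ | |z.im| ≤ ρ})
    (hFext : ∀ x : ℝ, Fc (x : ℂ) = (F x).map (fun a => (a : ℂ)))
    (hMext : ∀ x : ℝ, Mc (x : ℂ) = (M x).map (fun a => (a : ℂ)))
    (hnz : ∀ t : ℝ, ∃ x : ℝ,
      ((F x - t • (1 : Matrix (Fin l) (Fin l) ℝ)) * M x).det ≠ 0) :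
    ∀ C₂ : ℝ, 0 < C₂ → ∀ δ : ℝ, 0 < δ → δ < ρ →
      ∃ ε₁ : ℝ, 0 < ε₁ ∧ ∀ μ : ℝ, |μ| ≤ C₂ →
        ∃ y : ℝ, δ / 2 ≤ |y| ∧ |y| ≤ 2 * δ ∧
          ∀ x : ℝ, ε₁ ≤
            ‖((Fc ((x : ℂ) + (y : ℂ) * Complex.I) -
                  (μ : ℂ) • (1 : Matrix (Fin l) (Fin l) ℂ)) *
                Mc ((x : ℂ) + (y : ℂ) * Complex.I)).det‖ := by
  intro C₂ hC₂ δ hδ hδρ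
  set S : Set ℂ := {z : ℂ | |z.im| < ρ} with hS
  have hmemS : ∀ z : ℂ, z ∈ S ↔ |z.im| < ρ := fun z => Iff.rfl
  have hSeq : S = Complex.im ⁻¹' Set.Ioo (-ρ) ρ := by
    ext z; simp [hS, abs_lt]
  have hSo : IsOpen S := by rw [hSeq]; exact isOpen_Ioo.preimage Complex.continuous_im
  have hSc : IsPreconnected S := by
    rw [hSeq]
    exact ((convex_Ioo (-ρ) ρ).linear_preimage Complex.imLm).isPreconnected
  have hsub : S ⊆ {z : ℂ | |z.im| ≤ ρ} := by
    intro z hz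
    rw [hS, Set.mem_setOf_eq] at hz
    exact le_of_lt hz
  have hFa : ∀ i j, AnalyticOnNhd ℂ (fun z => Fc z i j) S := fun i j =>
    ((hFhol i j).mono hsub).analyticOnNhd hSo
  have hMa : ∀ i j, AnalyticOnNhd ℂ (fun z => Mc z i j) S := fun i j =>
    ((hMhol i j).mono hsub).analyticOnNhd hSo
  -- analyticity of gdet
  have hga : ∀ μ : ℝ, AnalyticOnNhd ℂ (gdet Fc Mc μ) S := by
    intro μ
    apply analyticOnNhd_matrix_det
    intro i j
    have heq : (fun z => ((Fc z - (μ : ℂ) • (1 : Matrix (Fin l) (Fin l) ℂ)) * Mc z) i j)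
        = fun z => ∑ k, (Fc z i k - (μ : ℂ) • (1 : Matrix (Fin l) (Fin l) ℂ) i k) * Mc z k j := by
      funext z
      simp [Matrix.mul_apply, Matrix.sub_apply]
    rw [heq]
    exact Finset.analyticOnNhd_fun_sum _ fun k _ =>
      ((hFa i k).sub analyticOnNhd_const).mul (hMa k j)
  -- value on the real axis
  have hgr : ∀ (μ : ℝ) (x : ℝ),
      gdet Fc Mc μ (x : ℂ) =
        ((((F x - μ • (1 : Matrix (Fin l) (Fin l) ℝ)) * M x).det : ℝ) : ℂ) := by
    intro μ x
    have hmap : (Fc (x : ℂ) - (μ : ℂ) • (1 : Matrix (Fin l) (Fin l) ℂ)) * Mc (x : ℂ)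
        = ((F x - μ • (1 : Matrix (Fin l) (Fin l) ℝ)) * M x).map (algebraMap ℝ ℂ) := by
      rw [hFext, hMext]
      ext i j
      simp [Matrix.mul_apply, Matrix.map_apply, Matrix.sub_apply, Matrix.smul_apply,
        Matrix.one_apply, apply_ite (fun r : ℝ => (r : ℂ)), mul_comm]
    rw [gdet, hmap, ← RingHom.mapMatrix_apply, ← RingHom.map_det]
    simp
  -- periodic in the strip
  have hper : ∀ (μ : ℝ), ∀ z ∈ S, gdet Fc Mc μ (z + ((2 * π : ℝ) : ℂ)) = gdet Fc Mc μ z := by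
    intro μ
    have hshift : ∀ z : ℂ, z ∈ S → z + ((2 * π : ℝ) : ℂ) ∈ S := by
      intro z hz
      rw [hmemS] at hz ⊢
      simpa using hz
    have h1 : AnalyticOnNhd ℂ (fun z => gdet Fc Mc μ (z + ((2 * π : ℝ) : ℂ))) S := by
      intro z hz
      have h2 : AnalyticAt ℂ (fun w : ℂ => w + ((2 * π : ℝ) : ℂ)) z :=
        analyticAt_id.add analyticAt_const
      have := AnalyticAt.comp (g := gdet Fc Mc μ)
        (f := fun w : ℂ => w + ((2 * π : ℝ) : ℂ)) (x := z) (hga μ _ (hshift z hz)) h2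
      simpa [Function.comp_def] using this
    have hreal : ∀ x : ℝ, gdet Fc Mc μ ((x : ℂ) + ((2 * π : ℝ) : ℂ)) = gdet Fc Mc μ (x : ℂ) := by
      intro x
      have h2 : ((x : ℂ) + ((2 * π : ℝ) : ℂ)) = (((x + 2 * π : ℝ)) : ℂ) := by push_cast; ring
      rw [h2, hgr, hgr]
      have hF : F (x + 2 * π) = F x := by
        ext i j; exact hFper i j x
      have hM : M (x + 2 * π) = M x := by
        ext i j; exact hMper i j x
      rw [hF, hM]
    have htend : Tendsto (fun x : ℝ => (x : ℂ)) (𝓝[≠] (0 : ℝ)) (𝓝[≠] (0 : ℂ)) := by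
      apply tendsto_nhdsWithin_of_tendsto_nhds_of_eventually_within
      · have := (Complex.continuous_ofReal.tendsto 0).mono_left
          (nhdsWithin_le_nhds (s := {(0:ℝ)}ᶜ))
        simpa using this
      · exact eventually_mem_nhdsWithin.mono fun x hx => by
          simpa using Complex.ofReal_ne_zero.2 (by simpa using hx)
    have hfreq : ∃ᶠ z in 𝓝[≠] (0 : ℂ),
        gdet Fc Mc μ (z + ((2 * π : ℝ) : ℂ)) = gdet Fc Mc μ z :=
      htend.frequently (Eventually.frequently (Eventually.of_forall fun x => hreal x))
    have h0S : (0 : ℂ) ∈ S := by rw [hmemS]; simpa using hρ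
    exact h1.eqOn_of_preconnected_of_frequently_eq (hga μ) hSc h0S hfreq
  -- not identically zero
  have hnz0 : ∀ μ : ℝ, ∃ x : ℝ, gdet Fc Mc μ ((x : ℂ)) ≠ 0 := by
    intro μ
    obtain ⟨x, hx⟩ := hnz μ
    exact ⟨x, by rw [hgr]; exact_mod_cast Complex.ofReal_ne_zero.2 hx⟩
  -- the rectangle
  set R : Set ℂ := {z : ℂ | z.re ∈ Icc 0 (2*π) ∧ z.im ∈ Icc (δ/2) δ} with hR
  have hRS : R ⊆ S := by
    intro z hz
    rw [hmemS]
    rw [hR, Set.mem_setOf_eq] at hz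
    have h1 := hz.2.1
    have h2 := hz.2.2
    rw [abs_lt]
    constructor <;> linarith
  have hRcomp : IsCompact R := by
    have : R = (fun p : ℝ × ℝ => (p.1 : ℂ) + (p.2 : ℂ) * Complex.I) ''
        (Icc 0 (2*π) ×ˢ Icc (δ/2) δ) := by
      ext z
      constructor
      · rintro ⟨h1, h2⟩
        exact ⟨(z.re, z.im), ⟨h1, h2⟩, by simp [Complex.ext_iff]⟩
      · rintro ⟨⟨a, b⟩, ⟨ha, hb⟩, rfl⟩
        constructor <;> simp [ha, hb]
    rw [this]
    exact (isCompact_Icc.prod isCompact_Icc).image (by fun_prop)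
  have hRclosed : IsClosed R := hRcomp.isClosed
  have hmemS2 : ∀ (x y₀ : ℝ), y₀ ∈ Icc (δ/2) δ → ((x:ℂ) + (y₀:ℂ)*Complex.I) ∈ S := by
    intro x y₀ hy₀
    rw [hmemS]
    have h1 : ((x:ℂ) + (y₀:ℂ)*Complex.I).im = y₀ := by simp
    rw [h1, abs_lt]
    have := hy₀.1
    have := hy₀.2
    constructor <;> linarith
  -- main claim for fixed μ₀
  have claim : ∀ μ₀ : ℝ, ∃ y ∈ Icc (δ/2) δ, ∃ ε : ℝ, 0 < ε ∧
      ∀ x ∈ Icc (0:ℝ) (2*π), ε ≤ ‖gdet Fc Mc μ₀ ((x:ℂ) + (y:ℂ)*Complex.I)‖ := by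
    intro μ₀
    set Z : Set ℂ := R ∩ {z | gdet Fc Mc μ₀ z = 0} with hZ
    have hnotzero : ¬ EqOn (gdet Fc Mc μ₀) 0 S := by
      obtain ⟨x, hx⟩ := hnz0 μ₀
      intro h
      exact hx (h (show (x:ℂ) ∈ S by rw [hmemS]; simpa using hρ))
    have hiso : ∀ z ∈ S, ∀ᶠ w in 𝓝[≠] z, gdet Fc Mc μ₀ w ≠ 0 := by
      intro z hz
      rcases (hga μ₀ z hz).eventually_eq_zero_or_eventually_ne_zero with h | h
      · exact absurd ((hga μ₀).eqOn_zero_of_preconnected_of_frequently_eq_zero hSc hz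
          ((h.filter_mono nhdsWithin_le_nhds).frequently)) hnotzero
      · exact h
    have hZR : Z ⊆ R := inter_subset_left
    have hZclosed : IsClosed Z := by
      apply isClosed_of_closure_subset
      intro w hw
      have hwR : w ∈ R := hRclosed.closure_subset (closure_mono hZR hw)
      have hwS : w ∈ S := hRS hwR
      have hNB : (𝓝[Z] w).NeBot := mem_closure_iff_nhdsWithin_neBot.1 hw
      have hc : Tendsto (gdet Fc Mc μ₀) (𝓝[Z] w) (𝓝 (gdet Fc Mc μ₀ w)) :=
        ((hga μ₀ w hwS).continuousAt.tendsto).mono_left nhdsWithin_le_nhds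
      have h0 : Tendsto (gdet Fc Mc μ₀) (𝓝[Z] w) (𝓝 0) := by
        apply Tendsto.congr' _ tendsto_const_nhds
        exact eventually_mem_nhdsWithin.mono fun z hz => (hz.2).symm
      exact ⟨hwR, tendsto_nhds_unique hc h0⟩
    have hZcomp : IsCompact Z := hRcomp.of_isClosed_subset hZclosed hZR
    have hZdisc : DiscreteTopology Z := by
      rw [discreteTopology_subtype_iff]
      intro z hz
      rw [inf_principal_eq_bot]
      exact (hiso z (hRS hz.1)).mono fun w hw hwZ => hw hwZ.2
    have hZfin : Z.Finite := hZcomp.finite (isDiscrete_iff_discreteTopology.mpr hZdisc)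
    have hIccInf : (Icc (δ/2) δ).Infinite := Set.Icc_infinite (by linarith)
    obtain ⟨y, hyI, hyZ⟩ := (hIccInf.diff (hZfin.image Complex.im)).nonempty
    have hymem : ∀ x : ℝ, ((x:ℂ) + (y:ℂ)*Complex.I) ∈ S := fun x => hmemS2 x y hyI
    have hcont : Continuous fun x : ℝ =>
        ‖gdet Fc Mc μ₀ ((x:ℂ) + (y:ℂ)*Complex.I)‖ := by
      apply continuous_norm.comp
      rw [continuous_iff_continuousAt]
      intro x
      have hzc : ContinuousAt (fun x : ℝ => ((x:ℂ) + (y:ℂ)*Complex.I)) x := by fun_prop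
      have := ContinuousAt.comp (g := gdet Fc Mc μ₀)
        (f := fun x : ℝ => ((x:ℂ) + (y:ℂ)*Complex.I)) (x := x)
        ((hga μ₀ _ (hymem x)).continuousAt) hzc
      simpa [Function.comp_def] using this
    have hne : (Icc (0:ℝ) (2*π)).Nonempty := ⟨0, left_mem_Icc.2 (by positivity)⟩
    obtain ⟨x₀, hx₀, hminOn⟩ := isCompact_Icc.exists_isMinOn hne hcont.continuousOn
    have hz₀R : ((x₀:ℂ) + (y:ℂ)*Complex.I) ∈ R := by
      rw [hR, Set.mem_setOf_eq]
      constructor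
      · simpa using hx₀
      · simpa using hyI
    have hz₀ne : gdet Fc Mc μ₀ ((x₀:ℂ) + (y:ℂ)*Complex.I) ≠ 0 := by
      intro h
      apply hyZ
      refine ⟨(x₀:ℂ) + (y:ℂ)*Complex.I, ⟨hz₀R, h⟩, by simp⟩
    refine ⟨y, hyI, ‖gdet Fc Mc μ₀ ((x₀:ℂ) + (y:ℂ)*Complex.I)‖,
      norm_pos_iff.mpr hz₀ne, fun x hx => hminOn hx⟩
  choose yfun hyfun εfun hεpos hεbound using claim
  have hΦcont : ∀ y₀ : ℝ, y₀ ∈ Icc (δ/2) δ → Continuous fun p : ℝ × ℝ =>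
      ‖gdet Fc Mc p.1 ((p.2:ℂ) + (y₀:ℂ)*Complex.I)‖ := by
    intro y₀ hy₀
    apply continuous_norm.comp
    have hz : Continuous fun p : ℝ × ℝ => ((p.2:ℂ) + (y₀:ℂ)*Complex.I) := by fun_prop
    have hFcc : ∀ i j, Continuous fun p : ℝ × ℝ =>
        Fc ((p.2:ℂ) + (y₀:ℂ)*Complex.I) i j := by
      intro i j
      rw [continuous_iff_continuousAt]
      intro p
      have := ContinuousAt.comp (g := fun z => Fc z i j)
        (f := fun p : ℝ × ℝ => ((p.2:ℂ) + (y₀:ℂ)*Complex.I)) (x := p)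
        ((hFa i j _ (hmemS2 p.2 y₀ hy₀)).continuousAt) hz.continuousAt
      simpa [Function.comp_def] using this
    have hMcc : ∀ i j, Continuous fun p : ℝ × ℝ =>
        Mc ((p.2:ℂ) + (y₀:ℂ)*Complex.I) i j := by
      intro i j
      rw [continuous_iff_continuousAt]
      intro p
      have := ContinuousAt.comp (g := fun z => Mc z i j)
        (f := fun p : ℝ × ℝ => ((p.2:ℂ) + (y₀:ℂ)*Complex.I)) (x := p)
        ((hMa i j _ (hmemS2 p.2 y₀ hy₀)).continuousAt) hz.continuousAt
      simpa [Function.comp_def] using this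
    show Continuous fun p : ℝ × ℝ =>
      ((Fc ((p.2:ℂ) + (y₀:ℂ)*Complex.I) - (p.1 : ℂ) • (1 : Matrix (Fin l) (Fin l) ℂ)) *
        Mc ((p.2:ℂ) + (y₀:ℂ)*Complex.I)).det
    apply Continuous.matrix_det
    apply Continuous.matrix_mul
    · exact (continuous_matrix hFcc).sub
        ((Complex.continuous_ofReal.comp continuous_fst).smul continuous_const)
    · exact continuous_matrix hMcc
  have key : ∀ μ₀ : ℝ, ∀ᶠ μ in 𝓝 μ₀, ∀ x ∈ Icc (0:ℝ) (2*π),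
      εfun μ₀ / 2 ≤ ‖gdet Fc Mc μ ((x:ℂ) + (yfun μ₀ : ℂ)*Complex.I)‖ := by
    intro μ₀
    apply isCompact_Icc.eventually_forall_of_forall_eventually
    intro x hx
    have hopen : IsOpen {p : ℝ × ℝ | εfun μ₀ / 2 <
        ‖gdet Fc Mc p.1 ((p.2:ℂ) + (yfun μ₀:ℂ)*Complex.I)‖} :=
      isOpen_lt continuous_const (hΦcont (yfun μ₀) (hyfun μ₀))
    have hmemp : (μ₀, x) ∈ {p : ℝ × ℝ | εfun μ₀ / 2 <
        ‖gdet Fc Mc p.1 ((p.2:ℂ) + (yfun μ₀:ℂ)*Complex.I)‖} :=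
      lt_of_lt_of_le (half_lt_self (hεpos μ₀)) (hεbound μ₀ x hx)
    exact Filter.eventually_iff_exists_mem.2 ⟨_, hopen.mem_nhds hmemp,
      fun p hp => le_of_lt hp⟩
  obtain ⟨T, hTmem, hTcover⟩ := isCompact_Icc.elim_nhds_subcover
    (fun μ₀ => {μ | ∀ x ∈ Icc (0:ℝ) (2*π),
      εfun μ₀/2 ≤ ‖gdet Fc Mc μ ((x:ℂ) + (yfun μ₀:ℂ)*Complex.I)‖})
    (fun μ₀ _ => key μ₀)
  have hTne : T.Nonempty := by
    have h0 : (0:ℝ) ∈ Icc (-C₂) C₂ := by constructor <;> linarith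
    obtain ⟨μ₀, hμ₀T, -⟩ := Set.mem_iUnion₂.1 (hTcover h0)
    exact ⟨μ₀, hμ₀T⟩
  refine ⟨T.inf' hTne (fun μ₀ => εfun μ₀ / 2), ?_, ?_⟩
  · exact (Finset.lt_inf'_iff hTne).2 fun b _ => half_pos (hεpos b)
  intro μ hμ
  have hμIcc : μ ∈ Icc (-C₂) C₂ := by
    rcases abs_le.1 hμ with ⟨h1, h2⟩
    exact ⟨h1, h2⟩
  obtain ⟨μ₀, hμ₀T, hμU⟩ := Set.mem_iUnion₂.1 (hTcover hμIcc)
  have hy := hyfun μ₀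
  have hypos : 0 < yfun μ₀ := lt_of_lt_of_le (by linarith) hy.1
  have hyabs : |yfun μ₀| = yfun μ₀ := abs_of_pos hypos
  refine ⟨yfun μ₀, by rw [hyabs]; exact hy.1, by rw [hyabs]; linarith [hy.2], ?_⟩
  intro x
  show T.inf' hTne (fun μ₀ => εfun μ₀ / 2) ≤
    ‖gdet Fc Mc μ ((x:ℂ) + (yfun μ₀:ℂ)*Complex.I)‖
  have hψper : Function.Periodic
      (fun x : ℝ => ‖gdet Fc Mc μ ((x:ℂ) + (yfun μ₀:ℂ)*Complex.I)‖) (2*π) := by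
    intro t
    have h1 : ((t + 2*π : ℝ):ℂ) + (yfun μ₀:ℂ)*Complex.I
        = ((t:ℂ) + (yfun μ₀:ℂ)*Complex.I) + ((2*π:ℝ):ℂ) := by push_cast; ring
    show ‖gdet Fc Mc μ (((t + 2*π : ℝ):ℂ) + (yfun μ₀:ℂ)*Complex.I)‖ = _
    rw [h1, hper μ _ (hmemS2 t (yfun μ₀) hy)]
  obtain ⟨x', hx', hxx'⟩ := hψper.exists_mem_Ico₀ (by positivity) x
  calc T.inf' hTne (fun μ₀ => εfun μ₀ / 2) ≤ εfun μ₀ / 2 := Finset.inf'_le _ hμ₀T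
    _ ≤ ‖gdet Fc Mc μ ((x':ℂ) + (yfun μ₀:ℂ)*Complex.I)‖ :=
        hμU x' ⟨hx'.1, le_of_lt hx'.2⟩
    _ = ‖gdet Fc Mc μ ((x:ℂ) + (yfun μ₀:ℂ)*Complex.I)‖ := hxx'.symm
end
end
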